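/- Let p ≥ 3, let v₁,…,v_k ∈ ℝ^n be orthonormal with positive weights λ₁,…,λ_k satisfying λ_j |⟨v_j, u⟩|^{p-2} ≤ (1/4) λ₁ |⟨v₁, u⟩|^{p-2} for all j ∈ {2,…,k}, and let u be a unit vector with ⟨v₁,u⟩ ≠ 0. Define u' := w/‖w‖₂ with w := Σ_ℓ λ_ℓ ⟨v_ℓ,u⟩^{p-1} v_ℓ, and let V := (v₂,…,v_n) complete v₁ to an orthonormal basis. Then tan θ(v₁, u') ≤ (1/4) tan θ(v₁, u), where tan θ(v₁, x) := ‖V^T x‖₂ / |⟨v₁, x⟩|. -/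

import Mathlib

open RealInnerProductSpace

theorem stmt_13 (n k p : ℕ) (hp : 3 ≤ p) (hk : 1 ≤ k)
    (v : Fin k → EuclideanSpace ℝ (Fin n)) (hv : Orthonormal ℝ v)
    (lam : Fin k → ℝ) (hlam : ∀ i, 0 < lam i)
    (u : EuclideanSpace ℝ (Fin n)) (hu : ‖u‖ = 1)
    (h0 : Fin k) (hh0 : h0 = ⟨0, by omega⟩)
    (hv1u : ⟪v h0, u⟫ ≠ 0)
    (hgap : ∀ j : Fin k, j ≠ h0 →
      lam j * |⟪v j, u⟫| ^ (p - 2) ≤ (1 / 4) * lam h0 * |⟪v h0, u⟫| ^ (p - 2))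
    (w : EuclideanSpace ℝ (Fin n))
    (hw : w = ∑ ℓ, (lam ℓ * ⟪v ℓ, u⟫ ^ (p - 1)) • v ℓ)
    (u' : EuclideanSpace ℝ (Fin n)) (hu' : u' = ‖w‖⁻¹ • w) :
    ‖u' - ⟪v h0, u'⟫ • v h0‖ / |⟪v h0, u'⟫|
      ≤ (1 / 4) * (‖u - ⟪v h0, u⟫ • v h0‖ / |⟪v h0, u⟫|) := by
  classical
  set c : Fin k → ℝ := fun j => ⟪v j, u⟫ with hc
  set f : Fin k → ℝ := fun ℓ => lam ℓ * c ℓ ^ (p - 1) with hf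
  have hip := orthonormal_iff_ite.mp hv
  -- inner of w with v h0
  have ha : ⟪v h0, w⟫ = f h0 := by
    rw [hw]; exact hv.inner_right_fintype f h0
  have hc1 : c h0 ≠ 0 := hv1u
  have hane : f h0 ≠ 0 := by
    simp only [hf]
    exact mul_ne_zero (ne_of_gt (hlam h0)) (pow_ne_zero _ hc1)
  have hwne : w ≠ 0 := by
    intro h; apply hane; rw [← ha, h, inner_zero_right]
  have hwpos : (0:ℝ) < ‖w‖⁻¹ := inv_pos.mpr (norm_pos_iff.mpr hwne)
  -- z = residual of w
  set z : EuclideanSpace ℝ (Fin n) := w - f h0 • v h0 with hz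
  have hzsum : z = ∑ ℓ ∈ Finset.univ.erase h0, f ℓ • v ℓ := by
    rw [hz, hw, ← Finset.sum_erase_add _ _ (Finset.mem_univ h0)]
    exact add_sub_cancel_right _ _
  have hznorm : ‖z‖ ^ 2 = ∑ ℓ ∈ Finset.univ.erase h0, f ℓ ^ 2 := by
    rw [← real_inner_self_eq_norm_sq, hzsum, hv.inner_sum]
    simp [sq]
  -- Bessel for y
  set y : EuclideanSpace ℝ (Fin n) := u - c h0 • v h0 with hy
  have hinnery : ∀ j, j ≠ h0 → ⟪v j, y⟫ = c j := by
    intro j hj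
    rw [hy, inner_sub_right, real_inner_smul_right, hip j h0]
    simp only [if_neg hj, mul_zero, sub_zero]
    rfl
  have hbessel : ∑ ℓ ∈ Finset.univ.erase h0, c ℓ ^ 2 ≤ ‖y‖ ^ 2 := by
    have := hv.sum_inner_products_le (s := Finset.univ.erase h0) y
    refine le_trans (le_of_eq ?_) this
    refine Finset.sum_congr rfl fun j hj => ?_
    rw [hinnery j (Finset.ne_of_mem_erase hj)]
    simp [sq_abs]
  set K : ℝ := (1 / 4) * lam h0 * |c h0| ^ (p - 2) with hK
  have hc1pos : (0:ℝ) < |c h0| := abs_pos.mpr hc1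
  have hKpos : 0 < K := by
    exact mul_pos (mul_pos (by norm_num) (hlam h0)) (pow_pos hc1pos _)
  have hp1 : p - 1 = (p - 2) + 1 := by omega
  have hterm : ∀ j : Fin k, j ≠ h0 → f j ^ 2 ≤ K ^ 2 * c j ^ 2 := by
    intro j hj
    have h1 : |f j| ≤ K * |c j| := by
      have : |f j| = (lam j * |c j| ^ (p - 2)) * |c j| := by
        rw [hf]
        rw [abs_mul, abs_pow, abs_of_pos (hlam j), hp1, pow_succ]
        ring
      rw [this]
      exact mul_le_mul_of_nonneg_right (hgap j hj) (abs_nonneg _)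
    calc f j ^ 2 = |f j| ^ 2 := (sq_abs _).symm
      _ ≤ (K * |c j|) ^ 2 := by
          apply pow_le_pow_left₀ (abs_nonneg _) h1
      _ = K ^ 2 * c j ^ 2 := by rw [mul_pow, sq_abs]
  have hz2 : ‖z‖ ^ 2 ≤ K ^ 2 * ‖y‖ ^ 2 := by
    rw [hznorm]
    calc ∑ ℓ ∈ Finset.univ.erase h0, f ℓ ^ 2
        ≤ ∑ ℓ ∈ Finset.univ.erase h0, K ^ 2 * c ℓ ^ 2 :=
          Finset.sum_le_sum fun j hj => hterm j (Finset.ne_of_mem_erase hj)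
      _ = K ^ 2 * ∑ ℓ ∈ Finset.univ.erase h0, c ℓ ^ 2 := by rw [Finset.mul_sum]
      _ ≤ K ^ 2 * ‖y‖ ^ 2 := by
          exact mul_le_mul_of_nonneg_left hbessel (sq_nonneg K)
  have hzy : ‖z‖ ≤ K * ‖y‖ := by
    have h2 : ‖z‖ ^ 2 ≤ (K * ‖y‖) ^ 2 := by rw [mul_pow]; exact hz2
    exact (pow_le_pow_iff_left₀ (norm_nonneg z) (by positivity) two_ne_zero).mp h2
  -- reduce LHS to ‖z‖ / |f h0|
  have hau' : ⟪v h0, u'⟫ = ‖w‖⁻¹ * f h0 := by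
    rw [hu', real_inner_smul_right, ha]
  have hresid : u' - ⟪v h0, u'⟫ • v h0 = ‖w‖⁻¹ • z := by
    rw [hu', real_inner_smul_right, ha, hz, smul_sub, smul_smul]
  have hLHS : ‖u' - ⟪v h0, u'⟫ • v h0‖ / |⟪v h0, u'⟫| = ‖z‖ / |f h0| := by
    rw [hresid, hau', norm_smul, abs_mul, Real.norm_eq_abs,
      abs_of_pos hwpos, mul_div_mul_left _ _ (ne_of_gt hwpos)]
  rw [hLHS]
  have habs : |f h0| = 4 * K * |c h0| := by
    rw [hf, hK, abs_mul, abs_pow, abs_of_pos (hlam h0), hp1, pow_succ]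
    ring
  rw [habs, div_le_iff₀ (mul_pos (mul_pos (by norm_num) hKpos) hc1pos)]
  have hrw : 1 / 4 * (‖y‖ / |c h0|) * (4 * K * |c h0|) = K * ‖y‖ := by
    field_simp
  calc ‖z‖ ≤ K * ‖y‖ := hzy
    _ = 1 / 4 * (‖y‖ / |c h0|) * (4 * K * |c h0|) := hrw.symm
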